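/- Let ε ∈ (0,1] and let A be a nonzero real 2×2 matrix satisfying the Cordes condition with parameter ε, i.e. (1+ε)·‖A‖_F² ≤ (tr A)². Set γ := (tr A)/‖A‖_F². Then for every real 2×2 matrix M one has |γ·(A:M) − tr M| ≤ √(1−ε)·‖M‖_F. (This is the pointwise form of the property of the Cordes condition: applied with M = D²v(x) it gives |γ A:D²v − Δv| ≤ √(1−ε)|D²v| almost everywhere.) -/
import Mathlib

set_option maxHeartbeats 1000000

private lemma cs4 (b1 b2 b3 b4 m1 m2 m3 m4 : ℝ) :
    (b1 * m1 + b2 * m2 + b3 * m3 + b4 * m4) ^ 2 ≤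
      (b1 ^ 2 + b2 ^ 2 + b3 ^ 2 + b4 ^ 2) * (m1 ^ 2 + m2 ^ 2 + (m3 ^ 2 + m4 ^ 2)) := by
  nlinarith [sq_nonneg (b1 * m2 - b2 * m1), sq_nonneg (b1 * m3 - b3 * m1),
    sq_nonneg (b1 * m4 - b4 * m1), sq_nonneg (b2 * m3 - b3 * m2),
    sq_nonneg (b2 * m4 - b4 * m2), sq_nonneg (b3 * m4 - b4 * m3)]


/-- If `ε ∈ (0,1]` and the nonzero real 2×2 matrix `A` satisfies the Cordes
condition `(1+ε)·‖A‖_F² ≤ (tr A)²`, then with `γ := tr A / ‖A‖_F²` one has, for every real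
2×2 matrix `M`, the pointwise Cordes property `|γ·(A:M) − tr M| ≤ √(1−ε)·‖M‖_F`. -/
theorem abs_gamma_frobenius_inner_sub_trace_le_of_cordes
    (ε : ℝ) (hε0 : 0 < ε) (hε1 : ε ≤ 1)
    (A : Matrix (Fin 2) (Fin 2) ℝ) (hA : A ≠ 0)
    (hCordes : (1 + ε) * (∑ i, ∑ j, (A i j) ^ 2) ≤ (Matrix.trace A) ^ 2)
    (M : Matrix (Fin 2) (Fin 2) ℝ) :
    |(Matrix.trace A / ∑ i, ∑ j, (A i j) ^ 2) * (∑ i, ∑ j, A i j * M i j) - Matrix.trace M|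
      ≤ Real.sqrt (1 - ε) * Real.sqrt (∑ i, ∑ j, (M i j) ^ 2) := by
  have ha : 0 < ∑ i, ∑ j, (A i j) ^ 2 := by
    have h : ¬ ∀ i j, A i j = 0 := by
      intro h; apply hA; ext i j; simp [h]
    push_neg at h
    obtain ⟨i, j, hij⟩ := h
    have h1 : (A i j) ^ 2 ≤ ∑ j', (A i j') ^ 2 :=
      Finset.single_le_sum (f := fun j' => A i j' ^ 2) (fun _ _ => sq_nonneg _) (Finset.mem_univ j)
    have h2 : ∑ j', (A i j') ^ 2 ≤ ∑ i', ∑ j', (A i' j') ^ 2 :=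
      Finset.single_le_sum (f := fun i' => ∑ j', A i' j' ^ 2) (fun i' _ => Finset.sum_nonneg fun _ _ => sq_nonneg _)
        (Finset.mem_univ i)
    have := pow_pos (abs_pos.mpr hij) 2
    rw [← sq_abs (A i j)] at h1
    linarith
  simp only [Fin.sum_univ_two, Matrix.trace, Matrix.diag_apply, Fin.isValue] at ha hCordes ⊢
  rw [← Real.sqrt_mul (by linarith : (0:ℝ) ≤ 1 - ε)]
  apply Real.abs_le_sqrt
  set a := A 0 0 ^ 2 + A 0 1 ^ 2 + (A 1 0 ^ 2 + A 1 1 ^ 2) with ha_def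
  set t := A 0 0 + A 1 1 with ht_def
  set X := A 0 0 * M 0 0 + A 0 1 * M 0 1 + (A 1 0 * M 1 0 + A 1 1 * M 1 1) with hX_def
  set T := M 0 0 + M 1 1 with hT_def
  set m := M 0 0 ^ 2 + M 0 1 ^ 2 + (M 1 0 ^ 2 + M 1 1 ^ 2) with hm_def
  have heq : t / a * X - T = (t * X - a * T) / a := by field_simp
  rw [heq, div_pow, div_le_iff₀ (by positivity)]
  have hm0 : 0 ≤ m := by positivity
  -- Cauchy–Schwarz with B = t•A - a•I
  have hCS : (t * X - a * T) ^ 2 ≤ ((t * A 0 0 - a) ^ 2 + (t * A 0 1) ^ 2 +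
      (t * A 1 0) ^ 2 + (t * A 1 1 - a) ^ 2) * m := by
    have h := cs4 (t * A 0 0 - a) (t * A 0 1) (t * A 1 0) (t * A 1 1 - a)
      (M 0 0) (M 0 1) (M 1 0) (M 1 1)
    have heq2 : t * X - a * T = (t * A 0 0 - a) * M 0 0 + (t * A 0 1) * M 0 1 +
        (t * A 1 0) * M 1 0 + (t * A 1 1 - a) * M 1 1 := by
      simp only [hX_def, hT_def]; ring
    rw [heq2, hm_def]
    exact h
  have hB : (t * A 0 0 - a) ^ 2 + (t * A 0 1) ^ 2 +
      (t * A 1 0) ^ 2 + (t * A 1 1 - a) ^ 2 ≤ (1 - ε) * a ^ 2 := by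
    have key : (t * A 0 0 - a) ^ 2 + (t * A 0 1) ^ 2 + (t * A 1 0) ^ 2 + (t * A 1 1 - a) ^ 2
        = 2 * a ^ 2 - t ^ 2 * a := by
      simp only [ha_def, ht_def]; ring
    rw [key]
    nlinarith [hCordes, ha]
  calc (t * X - a * T) ^ 2 ≤ ((t * A 0 0 - a) ^ 2 + (t * A 0 1) ^ 2 +
      (t * A 1 0) ^ 2 + (t * A 1 1 - a) ^ 2) * m := hCS
    _ ≤ (1 - ε) * a ^ 2 * m := by nlinarith
    _ = (1 - ε) * m * a ^ 2 := by ring
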